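/- (Corollary 1) Let μ be a probability measure on ℝ^{n_x} × ℝ, let T : ℝ^{n_x} → ℝ be a measurable predictor, and let ε ∈ (0,1), δ ∈ (0,1). Let the integer N satisfy N ≥ (7.47/ε) · ln(1/δ) and set r = ⌊εN/2⌋, assuming r ≥ 1. If (x₁,y₁), …, (x_N,y_N) are drawn i.i.d. from μ and q_i = |y_i − T(x_i)| for i = 1,…,N, then the value ρ = rmax_r{q_i}_{i=1}^N satisfies, with probability no smaller than 1−δ over the multisample drawn from the product measure μ^N, μ{ (x,y) : |y − T(x)| > ρ } ≤ ε. -/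

import Mathlib

set_option maxHeartbeats 1000000

open MeasureTheory Filter Topology

lemma aux_countP_ofFn {N : ℕ} (q : Fin N → ℝ) (p : ℝ → Bool) :
    (List.ofFn q).countP p = ∑ i, if p (q i) then 1 else 0 := by
  induction N with
  | zero => simp
  | succ n ih =>
      rw [List.ofFn_succ, List.countP_cons, ih, Fin.sum_univ_succ]
      omega

lemma aux_sorted_getD {l : List ℝ} (hs : l.Pairwise (· ≤ ·)) {t : ℝ} {r : ℕ}
    (h1 : 1 ≤ r) (hcount : r ≤ l.countP (fun x => decide (t ≤ x))) :
    t ≤ l.getD (l.length - r) 0 := by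
  have hrN : r ≤ l.length := le_trans hcount List.countP_le_length
  have hk : l.length - r < l.length := by omega
  rw [List.getD_eq_getElem _ _ hk]
  by_contra hlt
  push_neg at hlt
  have htake : (l.take (l.length - r + 1)).countP (fun x => decide (t ≤ x)) = 0 := by
    rw [List.countP_eq_zero]
    intro a ha
    rw [List.mem_take_iff_getElem] at ha
    obtain ⟨i, hi, rfl⟩ := ha
    have hiN : i < l.length := lt_of_lt_of_le hi (min_le_right _ _)
    have hile : i ≤ l.length - r := by
      have := lt_of_lt_of_le hi (min_le_left _ _); omega
    have hle : l[i] ≤ l[l.length - r] := by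
      rcases eq_or_lt_of_le hile with h | h
      · simp [h]
      · have := List.pairwise_iff_get.mp hs ⟨i, hiN⟩ ⟨l.length - r, hk⟩ h
        simpa using this
    simp only [decide_eq_true_eq]
    push_neg
    linarith
  have hdrop : (l.drop (l.length - r + 1)).countP (fun x => decide (t ≤ x)) ≤ r - 1 := by
    calc (l.drop (l.length - r + 1)).countP (fun x => decide (t ≤ x))
        ≤ (l.drop (l.length - r + 1)).length := List.countP_le_length
      _ = l.length - (l.length - r + 1) := by rw [List.length_drop]
      _ ≤ r - 1 := by omega
  have : l.countP (fun x => decide (t ≤ x)) ≤ r - 1 := by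
    conv_lhs => rw [← List.take_append_drop (l.length - r + 1) l]
    rw [List.countP_append, htake]
    omega
  omega

lemma aux_fubini {Ω : Type*} [MeasurableSpace Ω] (μ : Measure Ω) [SigmaFinite μ]
    (N : ℕ) (f : Ω → ℝ) :
    ∫ w : Fin N → Ω, ∏ i, f (w i) ∂(Measure.pi fun _ => μ) = (∫ x, f x ∂μ) ^ N := by
  letI : MeasureSpace Ω := ⟨μ⟩
  letI : SigmaFinite (volume : Measure Ω) := ‹SigmaFinite μ›
  have h : (Measure.pi fun _ : Fin N => μ) = (volume : Measure (Fin N → Ω)) :=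
    (volume_pi).symm
  simpa using integral_fintype_prod_eq_pow (ι := Fin N) f (μ := μ)

lemma aux_int {Ω : Type*} [MeasurableSpace Ω] (μ : Measure Ω) [SigmaFinite μ]
    (N : ℕ) (f : Ω → ℝ) (hf : Integrable f μ) :
    Integrable (fun w : Fin N → Ω => ∏ i, f (w i)) (Measure.pi fun _ => μ) := by
  letI : MeasureSpace Ω := ⟨μ⟩
  letI : SigmaFinite (volume : Measure Ω) := ‹SigmaFinite μ›
  have h : (Measure.pi fun _ : Fin N => μ) = (volume : Measure (Fin N → Ω)) :=
    (volume_pi).symm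
  rw [h]
  exact Integrable.fintype_prod (f := fun _ : Fin N => f) (fun _ => hf)

lemma aux_quantile {Ω : Type*} [MeasurableSpace Ω] (μ : Measure Ω) [IsProbabilityMeasure μ]
    (score : Ω → ℝ) (hsm : Measurable score) (hnn : ∀ p, 0 ≤ score p)
    (ε : ℝ) (hε0 : 0 < ε) (hε1 : ε < 1) :
    ∃ t : ℝ, μ {p | t < score p} ≤ ENNReal.ofReal ε ∧
      ENNReal.ofReal ε ≤ μ {p | t ≤ score p} := by
  set S : Set ℝ := {t | μ {p | t < score p} ≤ ENNReal.ofReal ε} with hS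
  have hmeas : ∀ t : ℝ, MeasurableSet {p | t < score p} := fun t =>
    hsm measurableSet_Ioi
  -- S is upward closed
  have hup : ∀ t ∈ S, ∀ t', t ≤ t' → t' ∈ S := by
    intro t ht t' htt'
    exact le_trans (measure_mono (fun p hp => lt_of_le_of_lt htt' hp)) ht
  -- S is nonempty
  have hne : S.Nonempty := by
    have hanti : Antitone (fun n : ℕ => {p : Ω | (n : ℝ) < score p}) := by
      intro m n hmn p hp
      exact lt_of_le_of_lt (Nat.cast_le.mpr hmn : (m:ℝ) ≤ (n:ℝ)) hp
    have hempty : (⋂ n : ℕ, {p : Ω | (n : ℝ) < score p}) = ∅ := by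
      ext p
      simp only [Set.mem_iInter, Set.mem_setOf_eq, Set.mem_empty_iff_false, iff_false,
        not_forall, not_lt]
      obtain ⟨n, hn⟩ := exists_nat_gt (score p)
      exact ⟨n, hn.le⟩
    have htend : Tendsto (fun n : ℕ => μ {p : Ω | (n : ℝ) < score p}) atTop
        (𝓝 (μ (⋂ n : ℕ, {p : Ω | (n : ℝ) < score p}))) :=
      tendsto_measure_iInter_atTop (fun n => (hmeas _).nullMeasurableSet) hanti
        ⟨0, measure_ne_top _ _⟩
    rw [hempty, measure_empty] at htend
    have : ∀ᶠ n : ℕ in atTop, μ {p : Ω | (n : ℝ) < score p} < ENNReal.ofReal ε :=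
      htend.eventually_lt_const (by simpa using ENNReal.ofReal_pos.mpr hε0)
    obtain ⟨n, hn⟩ := this.exists
    exact ⟨n, hn.le⟩
  -- S is bounded below by 0
  have hbdd : BddBelow S := by
    refine ⟨0, fun t ht => ?_⟩
    by_contra hlt
    push_neg at hlt
    simp only [hS, Set.mem_setOf_eq] at ht
    have heq : {p : Ω | t < score p} = Set.univ := by
      ext p; simpa using lt_of_lt_of_le hlt (hnn p)
    rw [heq, measure_univ] at ht
    exact absurd (lt_of_le_of_lt ht (ENNReal.ofReal_lt_one.mpr hε1)) (lt_irrefl _)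
  set t := sInf S with htdef
  refine ⟨t, ?_, ?_⟩
  · -- right continuity
    have hunion : {p : Ω | t < score p} =
        ⋃ n : ℕ, {p : Ω | t + 1 / (n + 1) < score p} := by
      ext p
      simp only [Set.mem_setOf_eq, Set.mem_iUnion]
      constructor
      · intro hp
        obtain ⟨n, hn⟩ := exists_nat_one_div_lt (sub_pos.mpr hp)
        exact ⟨n, by push_cast at hn ⊢; linarith⟩
      · rintro ⟨n, hn⟩
        have : (0:ℝ) < 1 / (n + 1) := by positivity
        linarith
    rw [hunion]
    have hmono : Monotone (fun n : ℕ => {p : Ω | t + 1 / ((n:ℝ) + 1) < score p}) := by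
      intro m n hmn p hp
      have : 1 / ((n:ℝ) + 1) ≤ 1 / ((m:ℝ) + 1) := by
        apply one_div_le_one_div_of_le (by positivity)
        exact_mod_cast by omega
      simp only [Set.mem_setOf_eq] at hp ⊢
      linarith
    rw [hmono.directed_le.measure_iUnion]
    refine iSup_le fun n => ?_
    have hpos : (0:ℝ) < 1 / ((n:ℝ) + 1) := by positivity
    have : ∃ s ∈ S, s < t + 1 / ((n:ℝ) + 1) := by
      apply (csInf_lt_iff hbdd hne).mp
      linarith
    obtain ⟨s, hsS, hst⟩ := this
    exact hup s hsS _ hst.le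
  · -- left limit
    have hinter : {p : Ω | t ≤ score p} =
        ⋂ n : ℕ, {p : Ω | t - 1 / ((n:ℝ) + 1) < score p} := by
      ext p
      simp only [Set.mem_setOf_eq, Set.mem_iInter]
      constructor
      · intro hp n
        have : (0:ℝ) < 1 / ((n:ℝ) + 1) := by positivity
        linarith
      · intro h
        by_contra hlt
        push_neg at hlt
        obtain ⟨n, hn⟩ := exists_nat_one_div_lt (sub_pos.mpr hlt)
        have := h n
        push_cast at hn this
        linarith
    rw [hinter]
    have hanti : Antitone (fun n : ℕ => {p : Ω | t - 1 / ((n:ℝ) + 1) < score p}) := by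
      intro m n hmn p hp
      have : 1 / ((n:ℝ) + 1) ≤ 1 / ((m:ℝ) + 1) := by
        apply one_div_le_one_div_of_le (by positivity)
        exact_mod_cast by omega
      simp only [Set.mem_setOf_eq] at hp ⊢
      linarith
    have htend : Tendsto (fun n : ℕ => μ {p : Ω | t - 1 / ((n:ℝ) + 1) < score p}) atTop
        (𝓝 (μ (⋂ n : ℕ, {p : Ω | t - 1 / ((n:ℝ) + 1) < score p}))) :=
      tendsto_measure_iInter_atTop (fun n => (hmeas _).nullMeasurableSet) hanti
        ⟨0, measure_ne_top _ _⟩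
    refine ge_of_tendsto htend (Filter.Eventually.of_forall fun n => ?_)
    have hnotS : t - 1 / ((n:ℝ) + 1) ∉ S := by
      intro hmem
      have := csInf_le hbdd hmem
      have hpos : (0:ℝ) < 1 / ((n:ℝ) + 1) := by positivity
      rw [← htdef] at this
      linarith
    simp only [hS, Set.mem_setOf_eq, not_le] at hnotS
    exact hnotS.le

/-- The `r`-th largest value of the collection `{q i}_{i=1}^N`
(the element at position `r` in decreasing order, counted with multiplicity). -/
noncomputable def rmax {N : ℕ} (r : ℕ) (q : Fin N → ℝ) : ℝ :=
  ((List.ofFn q).insertionSort (· ≤ ·)).getD (N - r) 0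

theorem stmt7 (nx : ℕ) (μ : Measure ((Fin nx → ℝ) × ℝ)) [IsProbabilityMeasure μ]
    (T : (Fin nx → ℝ) → ℝ) (hT : Measurable T)
    (ε δ : ℝ) (hε : ε ∈ Set.Ioo (0 : ℝ) 1) (hδ : δ ∈ Set.Ioo (0 : ℝ) 1)
    (N r : ℕ) (hN : 7.47 / ε * Real.log (1 / δ) ≤ (N : ℝ))
    (hrdef : (r : ℤ) = ⌊ε * (N : ℝ) / 2⌋) (hr : 1 ≤ r) :
    ENNReal.ofReal (1 - δ) ≤
      (Measure.pi fun _ : Fin N => μ)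
        {w : Fin N → (Fin nx → ℝ) × ℝ |
          μ {p : (Fin nx → ℝ) × ℝ |
              rmax r (fun i => |(w i).2 - T (w i).1|) < |p.2 - T p.1|} ≤
            ENNReal.ofReal ε} := by
  obtain ⟨hε0, hε1⟩ := hε
  obtain ⟨hδ0, hδ1⟩ := hδ
  have hsm : Measurable (fun p : (Fin nx → ℝ) × ℝ => |p.2 - T p.1|) :=
    (measurable_snd.sub (hT.comp measurable_fst)).abs
  obtain ⟨t, htA, htB⟩ := aux_quantile μ _ hsm (fun p => abs_nonneg _) ε hε0 hε1
  -- r bounds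
  have hrR : (r : ℝ) ≤ ε * N / 2 := by
    have h := Int.floor_le (ε * (N : ℝ) / 2)
    rw [← hrdef] at h
    exact_mod_cast h
  have hr1 : (1 : ℝ) ≤ (r : ℝ) := by exact_mod_cast hr
  -- counting function
  set c : (Fin N → (Fin nx → ℝ) × ℝ) → ℕ :=
    fun w => ∑ i, if t ≤ |(w i).2 - T (w i).1| then 1 else 0 with hcdef
  have hcm : Measurable c := by
    apply Finset.measurable_sum
    intro i _
    have hAi : MeasurableSet {w : Fin N → (Fin nx → ℝ) × ℝ | t ≤ |(w i).2 - T (w i).1|} :=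
      (hsm.comp (measurable_pi_apply i)) measurableSet_Ici
    exact Measurable.ite hAi measurable_const measurable_const
  set G : Set (Fin N → (Fin nx → ℝ) × ℝ) := {w | r ≤ c w} with hGdef
  have hGm : MeasurableSet G := hcm measurableSet_Ici
  -- G is contained in the target event
  have hGsub : G ⊆ {w : Fin N → (Fin nx → ℝ) × ℝ |
      μ {p : (Fin nx → ℝ) × ℝ |
        rmax r (fun i => |(w i).2 - T (w i).1|) < |p.2 - T p.1|} ≤ ENNReal.ofReal ε} := by
    intro w hw
    have hql : t ≤ rmax r (fun i => |(w i).2 - T (w i).1|) := by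
      have hlen : ((List.ofFn fun i => |(w i).2 - T (w i).1|).insertionSort (· ≤ ·)).length
          = N := by
        rw [List.length_insertionSort, List.length_ofFn]
      have hsort : ((List.ofFn fun i => |(w i).2 - T (w i).1|).insertionSort (· ≤ ·)).Pairwise
          (· ≤ ·) := List.pairwise_insertionSort _ _
      have hcnt : r ≤ ((List.ofFn fun i => |(w i).2 - T (w i).1|).insertionSort
          (· ≤ ·)).countP (fun x => decide (t ≤ x)) := by
        rw [(List.perm_insertionSort _ _).countP_eq, aux_countP_ofFn]
        simp only [decide_eq_true_eq]
        exact hw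
      have h := aux_sorted_getD hsort hr hcnt
      rw [hlen] at h
      exact h
    refine le_trans (measure_mono ?_) htA
    intro p hp
    exact lt_of_le_of_lt hql hp
  -- the weight function
  set f : (Fin nx → ℝ) × ℝ → ℝ := fun p => if t ≤ |p.2 - T p.1| then 1 / 2 else 1 with hfdef
  have hA : MeasurableSet {p : (Fin nx → ℝ) × ℝ | t ≤ |p.2 - T p.1|} := hsm measurableSet_Ici
  have hf_eq : f = fun p => 1 - (2⁻¹ : ℝ) *
      Set.indicator {p : (Fin nx → ℝ) × ℝ | t ≤ |p.2 - T p.1|} (fun _ => 1) p := by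
    funext p
    by_cases h : t ≤ |p.2 - T p.1|
    · simp [hfdef, h, Set.indicator_of_mem, Set.mem_setOf_eq]
      norm_num
    · simp [hfdef, h, Set.indicator_of_notMem, Set.mem_setOf_eq]
  have hind_int : Integrable
      (Set.indicator {p : (Fin nx → ℝ) × ℝ | t ≤ |p.2 - T p.1|} (fun _ => (1:ℝ))) μ :=
    (integrable_const (1 : ℝ)).indicator hA
  have hf_int : Integrable f μ := by
    rw [hf_eq]
    exact (integrable_const 1).sub (hind_int.const_mul _)
  set pr := (μ {p : (Fin nx → ℝ) × ℝ | t ≤ |p.2 - T p.1|}).toReal with hprdef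
  have hpr_le : pr ≤ 1 := by
    have h := ENNReal.toReal_mono ENNReal.one_ne_top (prob_le_one
      (μ := μ) (s := {p : (Fin nx → ℝ) × ℝ | t ≤ |p.2 - T p.1|}))
    simpa using h
  have hpr_ge : ε ≤ pr := by
    rw [hprdef]
    exact (ENNReal.ofReal_le_iff_le_toReal (measure_ne_top μ _)).mp htB
  have hf_integral : ∫ x, f x ∂μ = 1 - pr / 2 := by
    rw [hf_eq, integral_sub (integrable_const 1) (hind_int.const_mul _),
      integral_const, integral_const_mul, integral_indicator_const _ hA]
    simp [measure_univ, hprdef, Measure.real]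
    ring
  -- product representation
  have hprod_eq : ∀ w : Fin N → (Fin nx → ℝ) × ℝ,
      (∏ i, f (w i)) = (1 / 2 : ℝ) ^ (c w) := by
    intro w
    rw [hcdef, ← Finset.prod_pow_eq_pow_sum]
    refine Finset.prod_congr rfl fun i _ => ?_
    by_cases h : t ≤ |(w i).2 - T (w i).1| <;> simp [hfdef, h]
  have hF_int : Integrable (fun w => ∏ i, f (w i)) (Measure.pi fun _ : Fin N => μ) :=
    aux_int μ N f hf_int
  have hF_integral : ∫ w, (∏ i, f (w i)) ∂(Measure.pi fun _ : Fin N => μ)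
      = (1 - pr / 2) ^ N := by
    rw [aux_fubini, hf_integral]
  -- Markov
  set a : ℝ := (1 / 2 : ℝ) ^ (ε * N / 2) with hadef
  have ha_pos : 0 < a := Real.rpow_pos_of_pos (by norm_num) _
  have hsub2 : Gᶜ ⊆ {w : Fin N → (Fin nx → ℝ) × ℝ | a ≤ ∏ i, f (w i)} := by
    intro w hw
    simp only [hGdef, Set.mem_compl_iff, Set.mem_setOf_eq, not_le] at hw
    have hcr : (c w : ℝ) + 1 ≤ (r : ℝ) := by exact_mod_cast hw
    have hcw : (c w : ℝ) ≤ ε * N / 2 := by linarith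
    show a ≤ ∏ i, f (w i)
    rw [hprod_eq w, ← Real.rpow_natCast ((1:ℝ)/2) (c w)]
    exact Real.rpow_le_rpow_of_exponent_ge (by norm_num) (by norm_num) hcw
  have hmarkov := mul_meas_ge_le_integral_of_nonneg
    (μ := Measure.pi fun _ : Fin N => μ)
    (Filter.Eventually.of_forall fun w => by
      rw [hprod_eq w]; positivity)
    hF_int a
  rw [hF_integral] at hmarkov
  have h1 : ((Measure.pi fun _ : Fin N => μ) Gᶜ).toReal ≤
      ((Measure.pi fun _ : Fin N => μ)
        {w : Fin N → (Fin nx → ℝ) × ℝ | a ≤ ∏ i, f (w i)}).toReal :=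
    ENNReal.toReal_mono (measure_ne_top _ _) (measure_mono hsub2)
  have hGc : ((Measure.pi fun _ : Fin N => μ) Gᶜ).toReal ≤ (1 - pr / 2) ^ N / a := by
    rw [le_div_iff₀ ha_pos]
    calc ((Measure.pi fun _ : Fin N => μ) Gᶜ).toReal * a
        ≤ ((Measure.pi fun _ : Fin N => μ)
          {w : Fin N → (Fin nx → ℝ) × ℝ | a ≤ ∏ i, f (w i)}).toReal * a := by
          apply mul_le_mul_of_nonneg_right h1 ha_pos.le
      _ ≤ (1 - pr / 2) ^ N := by simp only [Measure.real] at hmarkov; linarith [hmarkov]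
  -- numeric bound
  have hεN : 7.47 * Real.log (1 / δ) ≤ ε * (N : ℝ) := by
    rw [div_mul_eq_mul_div, div_le_iff₀ hε0] at hN
    linarith
  have hL0 : 0 ≤ Real.log (1 / δ) := Real.log_nonneg (by rw [le_div_iff₀ hδ0]; linarith)
  have hnum : (1 - pr / 2) ^ N / a ≤ δ := by
    have hstep : (1 - pr / 2) ^ N ≤ (1 - ε / 2) ^ N := by
      apply pow_le_pow_left₀ (by linarith) (by linarith)
    have hd2 : (1 - pr / 2) ^ N / a ≤ (1 - ε / 2) ^ N / a := by gcongr
    refine le_trans hd2 ?_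
    -- rewrite in exponential form
    have he1 : (1 - ε / 2) ^ N = Real.exp ((N : ℝ) * Real.log (1 - ε / 2)) := by
      rw [Real.exp_nat_mul, Real.exp_log (by linarith)]
    have he2 : a = Real.exp (ε * N / 2 * Real.log (1 / 2)) := by
      rw [hadef, Real.rpow_def_of_pos (by norm_num)]
      ring_nf
    have hlog12 : Real.log (1 / 2 : ℝ) = -Real.log 2 := by
      rw [one_div, Real.log_inv]
    have hlog1 : Real.log (1 - ε / 2) ≤ -(ε / 2) := by
      have := Real.log_le_sub_one_of_pos (x := 1 - ε / 2) (by linarith)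
      linarith
    have hlog2 : Real.log 2 ≤ 0.6931471808 := Real.log_two_lt_d9.le
    rw [he1, he2, ← Real.exp_sub]
    rw [show δ = Real.exp (Real.log δ) from (Real.exp_log hδ0).symm]
    apply Real.exp_le_exp.mpr
    rw [hlog12]
    have hlogδ : Real.log (1 / δ) = -Real.log δ := by rw [one_div, Real.log_inv]
    have e1 : (N : ℝ) * Real.log (1 - ε / 2) ≤ (N : ℝ) * (-(ε / 2)) :=
      mul_le_mul_of_nonneg_left hlog1 (Nat.cast_nonneg N)
    have e2 : ε * N / 2 * Real.log 2 ≤ ε * N / 2 * 0.6931471808 := by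
      apply mul_le_mul_of_nonneg_left hlog2
      positivity
    nlinarith [e1, e2, hεN, hL0, hlogδ]
  -- conclude
  have hGc2 : (Measure.pi fun _ : Fin N => μ) Gᶜ ≤ ENNReal.ofReal δ := by
    rw [ENNReal.le_ofReal_iff_toReal_le (measure_ne_top _ _) hδ0.le]
    exact le_trans hGc hnum
  have hsum : (Measure.pi fun _ : Fin N => μ) G + (Measure.pi fun _ : Fin N => μ) Gᶜ = 1 := by
    rw [measure_add_measure_compl hGm, measure_univ]
  refine le_trans ?_ (measure_mono hGsub)
  have hofadd : ENNReal.ofReal (1 - δ) + ENNReal.ofReal δ = 1 := by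
    rw [← ENNReal.ofReal_add (by linarith) hδ0.le]
    norm_num
  have hkey : ENNReal.ofReal (1 - δ) + ENNReal.ofReal δ ≤
      (Measure.pi fun _ : Fin N => μ) G + ENNReal.ofReal δ := by
    rw [hofadd, ← hsum]
    exact add_le_add le_rfl hGc2
  exact (ENNReal.add_le_add_iff_right ENNReal.ofReal_ne_top).mp hkey
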